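/- Let r₀ : ℝ → ℂ be continuous with Re r₀(τ) ≤ 0 and |r₀(τ)| ≤ C(1+|τ|)^{1/3} for all τ ∈ ℝ (for some constant C > 0), and let h : ℝ → ℂ be a Schwartz function. Define, for t ∈ ℝ and x ≥ 0, R(t,x) = (1/2π)∫_ℝ e^{itτ} e^{r₀(τ)x} ĥ(τ) dτ (the integral converges absolutely). Then for every t ∈ ℝ: R(t,0) = h(t); the map x ↦ R(t,x) is twice differentiable on [0,∞) (one-sided derivatives at x = 0), with ∂_x R(t,0) = (1/2π)∫_ℝ e^{itτ} r₀(τ) ĥ(τ) dτ and ∂_x² R(t,0) = (1/2π)∫_ℝ e^{itτ} r₀(τ)² ĥ(τ) dτ. -/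

import Mathlib

open MeasureTheory

/-- One-dimensional Fourier transform: `ĥ(τ) = ∫ e^{-iτt} h(t) dt`. -/
noncomputable def FT1 (h : ℝ → ℂ) (τ : ℝ) : ℂ :=
  ∫ t : ℝ, Complex.exp (-(Complex.I * τ * t)) * h t

/-- The right half-line boundary potential
`R(t,x) = (1/2π) ∫ e^{itτ} e^{r₀(τ)x} ĥ(τ) dτ`. -/
noncomputable def Rpot (r₀ : ℝ → ℂ) (h : ℝ → ℂ) (t x : ℝ) : ℂ :=
  (1 / (2 * (Real.pi : ℂ))) *
    ∫ τ : ℝ, Complex.exp (Complex.I * t * τ) * Complex.exp (r₀ τ * x) * FT1 h τ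

private lemma exp_lip {a : ℂ} (ha : a.re ≤ 0) {x y : ℝ} (hx : 0 ≤ x) (hy : 0 ≤ y) :
    ‖Complex.exp (a * y) - Complex.exp (a * x)‖ ≤ ‖a‖ * ‖y - x‖ := by
  have hd : ∀ s : ℝ, s ∈ Set.Ici (0:ℝ) →
      HasDerivWithinAt (fun s : ℝ => Complex.exp (a * s))
        (Complex.exp (a * s) * a) (Set.Ici 0) s := by
    intro s _
    have h1 : HasDerivAt (fun s : ℝ => a * (s : ℂ)) a s := by
      simpa using (Complex.ofRealCLM.hasDerivAt (x := s)).const_mul a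
    exact h1.cexp.hasDerivWithinAt
  have hb : ∀ s : ℝ, s ∈ Set.Ici (0:ℝ) → ‖Complex.exp (a * s) * a‖ ≤ ‖a‖ := by
    intro s hs
    rw [norm_mul]
    have h2 : ‖Complex.exp (a * s)‖ ≤ 1 := by
      rw [Complex.norm_exp, Real.exp_le_one_iff]
      have : (a * (s:ℂ)).re = a.re * s := by simp [Complex.mul_re]
      rw [this]
      exact mul_nonpos_of_nonpos_of_nonneg ha hs
    nlinarith [norm_nonneg a, norm_nonneg (Complex.exp (a * (s:ℂ)))]
  exact (convex_Ici (0:ℝ)).norm_image_sub_le_of_norm_hasDerivWithin_le hd hb hx hy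

private lemma schwartz_decay_int (g : SchwartzMap ℝ ℂ) (k : ℕ) :
    Integrable (fun τ : ℝ => (1 + |τ|) ^ k * ‖g (τ / (2 * Real.pi))‖) := by
  have h1 : ∀ m : ℕ, Integrable (fun σ : ℝ => |σ| ^ m * ‖g σ‖) := fun m => by
    simpa [Real.norm_eq_abs] using g.integrable_pow_mul volume m
  have h2 : Integrable (fun σ : ℝ => (1 + |σ|) ^ k * ‖g σ‖) := by
    have hb : Integrable (fun σ : ℝ => (2:ℝ)^k * (‖g σ‖ + |σ|^k * ‖g σ‖)) :=
      ((g.integrable (μ := volume)).norm.add (h1 k)).const_mul _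
    refine hb.mono' ?_ ?_
    · exact (((continuous_const.add continuous_abs).pow k).mul
        g.continuous.norm).aestronglyMeasurable
    · filter_upwards with σ
      have h0 : (0:ℝ) ≤ |σ| := abs_nonneg σ
      have hg0 : (0:ℝ) ≤ ‖g σ‖ := norm_nonneg _
      rw [Real.norm_eq_abs, abs_of_nonneg (by positivity)]
      have hpow : (1 + |σ|)^k ≤ 2^k * (1 + |σ|^k) := by
        calc (1 + |σ|)^k ≤ (2 * max 1 |σ|)^k := by
              apply pow_le_pow_left₀ (by positivity)
              rcases le_total |σ| 1 with h | h
              · rw [max_eq_left h]; linarith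
              · rw [max_eq_right h]; linarith
          _ = 2^k * (max 1 |σ|)^k := by rw [mul_pow]
          _ ≤ 2^k * (1 + |σ|^k) := by
              have : (max 1 |σ|)^k ≤ 1 + |σ|^k := by
                rcases le_total |σ| 1 with h | h
                · rw [max_eq_left h]; simpa using pow_nonneg h0 k
                · rw [max_eq_right h]; nlinarith [pow_nonneg h0 k]
              have h2k : (0:ℝ) ≤ 2^k := by positivity
              nlinarith
      calc (1 + |σ|)^k * ‖g σ‖ ≤ (2^k * (1 + |σ|^k)) * ‖g σ‖ :=
            mul_le_mul_of_nonneg_right hpow hg0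
        _ = (2:ℝ)^k * (‖g σ‖ + |σ|^k * ‖g σ‖) := by ring
  have hπ : (2 * Real.pi) ≠ 0 := by positivity
  have h3 : Integrable (fun σ : ℝ => (1 + 2*Real.pi)^k * ((1 + |σ|)^k * ‖g σ‖)) :=
    h2.const_mul _
  have h4 := h3.comp_div (R := 2*Real.pi) hπ
  refine h4.mono' ?_ ?_
  · exact (((continuous_const.add continuous_abs).pow k).mul
      ((g.continuous.comp (continuous_id.div_const _)).norm)).aestronglyMeasurable
  · filter_upwards with τ
    have h0 : (0:ℝ) ≤ |τ/(2*Real.pi)| := abs_nonneg _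
    have hg0 : (0:ℝ) ≤ ‖g (τ/(2*Real.pi))‖ := norm_nonneg _
    rw [Real.norm_eq_abs, abs_of_nonneg (by positivity)]
    have habs : |τ| = (2*Real.pi) * |τ/(2*Real.pi)| := by
      rw [abs_div, abs_of_pos (by positivity : (0:ℝ) < 2*Real.pi)]
      field_simp
    have hkey : 1 + |τ| ≤ (1 + 2*Real.pi) * (1 + |τ/(2*Real.pi)|) := by
      rw [habs]; nlinarith [Real.pi_pos]
    have hpow : (1 + |τ|)^k ≤ (1 + 2*Real.pi)^k * (1 + |τ/(2*Real.pi)|)^k := by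
      rw [← mul_pow]
      exact pow_le_pow_left₀ (by positivity) hkey k
    calc (1 + |τ|)^k * ‖g (τ/(2*Real.pi))‖
        ≤ ((1 + 2*Real.pi)^k * (1 + |τ/(2*Real.pi)|)^k) * ‖g (τ/(2*Real.pi))‖ :=
          mul_le_mul_of_nonneg_right hpow hg0
      _ = (1 + 2*Real.pi)^k * ((1 + |τ/(2*Real.pi)|)^k * ‖g (τ/(2*Real.pi))‖) := by ring

private lemma FT1_eq (h : ℝ → ℂ) (τ : ℝ) :
    FT1 h τ = FourierTransform.fourier h (τ / (2 * Real.pi)) := by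
  rw [Real.fourier_real_eq_integral_exp_smul, FT1]
  congr 1
  funext v
  rw [smul_eq_mul]
  congr 2
  have hπ : (Real.pi:ℂ) ≠ 0 := Complex.ofReal_ne_zero.mpr Real.pi_ne_zero
  push_cast
  field_simp

open Filter

/-- Trace and boundary-derivative identities for the right half-line
potential `R`. -/
theorem Rpot_traces (C : ℝ) (hC : 0 < C) (r₀ : ℝ → ℂ) (hcont : Continuous r₀)
    (hre : ∀ τ : ℝ, (r₀ τ).re ≤ 0)
    (hbd : ∀ τ : ℝ, ‖r₀ τ‖ ≤ C * (1 + |τ|) ^ ((1:ℝ)/3))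
    (h : SchwartzMap ℝ ℂ) :
    ∀ t : ℝ,
      (∀ x : ℝ, 0 ≤ x → Integrable (fun τ : ℝ =>
        Complex.exp (Complex.I * t * τ) * Complex.exp (r₀ τ * x) * FT1 (⇑h) τ)) ∧
      Rpot r₀ (⇑h) t 0 = h t ∧
      ∃ R1 : ℝ → ℂ,
        (∀ x ∈ Set.Ici (0:ℝ),
          HasDerivWithinAt (fun y => Rpot r₀ (⇑h) t y) (R1 x) (Set.Ici 0) x) ∧
        R1 0 = (1 / (2 * (Real.pi : ℂ))) *
          ∫ τ : ℝ, Complex.exp (Complex.I * t * τ) * r₀ τ * FT1 (⇑h) τ ∧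
        ∃ R2 : ℝ → ℂ,
          (∀ x ∈ Set.Ici (0:ℝ), HasDerivWithinAt R1 (R2 x) (Set.Ici 0) x) ∧
          R2 0 = (1 / (2 * (Real.pi : ℂ))) *
            ∫ τ : ℝ, Complex.exp (Complex.I * t * τ) * (r₀ τ)^2 * FT1 (⇑h) τ := by
  intro t
  set g : SchwartzMap ℝ ℂ := SchwartzMap.fourierTransformCLM ℂ h with hgdef
  have hgapp : ∀ σ : ℝ, g σ = FourierTransform.fourier (⇑h) σ := fun σ => by
    rw [hgdef, SchwartzMap.fourierTransformCLM_apply]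
    rfl
  have hFT : ∀ τ : ℝ, FT1 (⇑h) τ = g (τ / (2 * Real.pi)) := fun τ => by
    rw [FT1_eq, hgapp]
  have hFTc : Continuous (FT1 (⇑h)) := by
    have : Continuous fun τ : ℝ => g (τ / (2*Real.pi)) :=
      g.continuous.comp (continuous_id.div_const _)
    exact this.congr fun τ => (hFT τ).symm
  set Φ : ℕ → ℝ → ℝ → ℂ := fun k x τ =>
    Complex.exp (Complex.I * t * τ) * r₀ τ ^ k * Complex.exp (r₀ τ * x) * FT1 (⇑h) τ with hΦ
  have hnorm : ∀ (k : ℕ) (x τ : ℝ), 0 ≤ x → ‖Φ k x τ‖ ≤ ‖r₀ τ‖^k * ‖FT1 (⇑h) τ‖ := by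
    intro k x τ hx
    have h1 : ‖Complex.exp (Complex.I * (t:ℂ) * (τ:ℂ))‖ = 1 := by
      rw [Complex.norm_exp]
      simp [Complex.mul_re]
    have h2 : ‖Complex.exp (r₀ τ * x)‖ ≤ 1 := by
      rw [Complex.norm_exp, Real.exp_le_one_iff]
      have : (r₀ τ * (x:ℂ)).re = (r₀ τ).re * x := by simp [Complex.mul_re]
      rw [this]
      exact mul_nonpos_of_nonpos_of_nonneg (hre τ) hx
    have := norm_nonneg (FT1 (⇑h) τ)
    have := norm_nonneg (r₀ τ)
    simp only [hΦ, norm_mul, norm_pow, h1, one_mul]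
    calc ‖r₀ τ‖ ^ k * ‖Complex.exp (r₀ τ * (x:ℂ))‖ * ‖FT1 (⇑h) τ‖
        ≤ ‖r₀ τ‖ ^ k * 1 * ‖FT1 (⇑h) τ‖ := by
          gcongr
      _ = ‖r₀ τ‖ ^ k * ‖FT1 (⇑h) τ‖ := by ring
  have hrk : ∀ (k:ℕ) (τ:ℝ), ‖r₀ τ‖^k ≤ C^k * (1+|τ|)^k := by
    intro k τ
    have h1 : ‖r₀ τ‖ ≤ C * (1+|τ|) := by
      refine (hbd τ).trans ?_
      have h2 : (1+|τ|) ^ ((1:ℝ)/3) ≤ (1+|τ|) ^ (1:ℝ) :=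
        Real.rpow_le_rpow_of_exponent_le (by linarith [abs_nonneg τ]) (by norm_num)
      rw [Real.rpow_one] at h2
      nlinarith
    calc ‖r₀ τ‖^k ≤ (C*(1+|τ|))^k := pow_le_pow_left₀ (norm_nonneg _) h1 k
      _ = C^k * (1+|τ|)^k := mul_pow _ _ _
  have hbnd_int : ∀ k : ℕ, Integrable (fun τ : ℝ => C^k * ((1+|τ|)^k * ‖FT1 (⇑h) τ‖)) := by
    intro k
    refine ((schwartz_decay_int g k).const_mul (C^k)).congr
      (Eventually.of_forall fun τ => ?_)
    simp only [hFT]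
  have hmeas : ∀ (k : ℕ) (x : ℝ), AEStronglyMeasurable (fun τ => Φ k x τ) volume := by
    intro k x
    apply Continuous.aestronglyMeasurable
    apply Continuous.mul ?_ hFTc
    apply Continuous.mul
    · exact (Continuous.mul
        ((continuous_const.mul Complex.continuous_ofReal).cexp) (hcont.pow k))
    · exact ((hcont.mul continuous_const).cexp)
  have hint : ∀ (k : ℕ) (x : ℝ), 0 ≤ x → Integrable (fun τ => Φ k x τ) := by
    intro k x hx
    refine (hbnd_int k).mono' (hmeas k x) ?_
    filter_upwards with τ
    refine (hnorm k x τ hx).trans ?_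
    calc ‖r₀ τ‖^k * ‖FT1 (⇑h) τ‖ ≤ (C^k * (1+|τ|)^k) * ‖FT1 (⇑h) τ‖ :=
          mul_le_mul_of_nonneg_right (hrk k τ) (norm_nonneg _)
      _ = C^k * ((1+|τ|)^k * ‖FT1 (⇑h) τ‖) := by ring
  have hderiv : ∀ k : ℕ, ∀ x ∈ Set.Ici (0:ℝ),
      HasDerivWithinAt (fun y => ∫ τ, Φ k y τ) (∫ τ, Φ (k+1) x τ) (Set.Ici 0) x := by
    intro k x hx
    have hx' : (0:ℝ) ≤ x := hx
    rw [hasDerivWithinAt_iff_tendsto_slope]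
    have main : Tendsto (fun y : ℝ => ∫ τ, (y - x)⁻¹ • (Φ k y τ - Φ k x τ))
        (nhdsWithin x (Set.Ici 0 \ {x})) (nhds (∫ τ, Φ (k+1) x τ)) := by
      apply tendsto_integral_filter_of_dominated_convergence
        (bound := fun τ => C^(k+1) * ((1+|τ|)^(k+1) * ‖FT1 (⇑h) τ‖))
      · filter_upwards with y
        exact (((hmeas k y).sub (hmeas k x)).const_smul ((y - x)⁻¹ : ℝ))
      · filter_upwards [self_mem_nhdsWithin] with y hy
        filter_upwards with τ
        have hy0 : (0:ℝ) ≤ y := hy.1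
        have hyx : y ≠ x := by simpa using hy.2
        have hfactor : Φ k y τ - Φ k x τ =
            (Complex.exp (Complex.I*t*τ) * r₀ τ ^ k * FT1 (⇑h) τ) *
            (Complex.exp (r₀ τ * y) - Complex.exp (r₀ τ * x)) := by
          simp only [hΦ]; ring
        rw [hfactor, norm_smul, norm_mul]
        have h1 : ‖Complex.exp (Complex.I * (t:ℂ) * (τ:ℂ))‖ = 1 := by
          rw [Complex.norm_exp]
          simp [Complex.mul_re]
        have hexp : ‖Complex.exp (r₀ τ * y) - Complex.exp (r₀ τ * x)‖ ≤ ‖r₀ τ‖ * ‖y - x‖ :=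
          exp_lip (hre τ) hx' hy0
        have hA : ‖Complex.exp (Complex.I*(t:ℂ)*(τ:ℂ)) * r₀ τ ^ k * FT1 (⇑h) τ‖
            = ‖r₀ τ‖^k * ‖FT1 (⇑h) τ‖ := by
          rw [norm_mul, norm_mul, h1, norm_pow, one_mul]
        rw [hA]
        have hyx' : ‖y - x‖ ≠ 0 := by
          simpa [sub_eq_zero] using hyx
        have hnn : (0:ℝ) ≤ ‖y - x‖ := norm_nonneg _
        calc ‖((y - x)⁻¹ : ℝ)‖ * (‖r₀ τ‖^k * ‖FT1 (⇑h) τ‖ *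
              ‖Complex.exp (r₀ τ * y) - Complex.exp (r₀ τ * x)‖)
            ≤ ‖y - x‖⁻¹ * (‖r₀ τ‖^k * ‖FT1 (⇑h) τ‖ * (‖r₀ τ‖ * ‖y - x‖)) := by
              rw [norm_inv]
              gcongr
          _ = (‖y - x‖⁻¹ * ‖y - x‖) * (‖r₀ τ‖^(k+1) * ‖FT1 (⇑h) τ‖) := by ring
          _ = ‖r₀ τ‖^(k+1) * ‖FT1 (⇑h) τ‖ := by rw [inv_mul_cancel₀ hyx', one_mul]
          _ ≤ (C^(k+1) * (1+|τ|)^(k+1)) * ‖FT1 (⇑h) τ‖ :=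
              mul_le_mul_of_nonneg_right (hrk (k+1) τ) (norm_nonneg _)
          _ = C^(k+1) * ((1+|τ|)^(k+1) * ‖FT1 (⇑h) τ‖) := by ring
      · exact hbnd_int (k+1)
      · filter_upwards with τ
        have h1 : HasDerivAt (fun z : ℝ => Complex.exp (r₀ τ * z))
            (Complex.exp (r₀ τ * x) * r₀ τ) x := by
          have h0 : HasDerivAt (fun z : ℝ => r₀ τ * (z : ℂ)) (r₀ τ) x := by
            simpa using (Complex.ofRealCLM.hasDerivAt (x := x)).const_mul (r₀ τ)
          exact h0.cexp
        have hD : HasDerivWithinAt (fun z : ℝ => Φ k z τ) (Φ (k+1) x τ) (Set.Ici 0) x := by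
          have h2 := (h1.const_mul (Complex.exp (Complex.I*t*τ) * r₀ τ ^ k)).mul_const
            (FT1 (⇑h) τ)
          have h3 : Φ (k+1) x τ = Complex.exp (Complex.I*t*τ) * r₀ τ ^ k *
              (Complex.exp (r₀ τ * x) * r₀ τ) * FT1 (⇑h) τ := by
            simp only [hΦ]; ring
          rw [h3]
          exact h2.hasDerivWithinAt
        rw [hasDerivWithinAt_iff_tendsto_slope] at hD
        refine hD.congr fun y => ?_
        rw [slope_def_module]
    refine main.congr' ?_
    filter_upwards [self_mem_nhdsWithin] with y hy
    rw [slope_def_module, integral_smul, integral_sub (hint k y hy.1) (hint k x hx')]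
  have hGint : Integrable (FourierTransform.fourier (⇑h)) := by
    refine (g.integrable (μ := volume)).congr (Eventually.of_forall fun σ => hgapp σ)
  have hinv : FourierTransformInv.fourierInv (FourierTransform.fourier (⇑h)) t = h t := by
    rw [Continuous.fourierInv_fourier_eq h.continuous (h.integrable (μ := volume)) hGint]
  have htrace : Rpot r₀ (⇑h) t 0 = h t := by
    rw [Rpot]
    have hstep1 : (fun τ : ℝ => Complex.exp (Complex.I*t*τ) *
          Complex.exp (r₀ τ * ((0:ℝ):ℂ)) * FT1 (⇑h) τ)
        = fun τ : ℝ => (fun σ : ℝ => Complex.exp (Complex.I*t*((2*Real.pi*σ : ℝ):ℂ)) *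
            FourierTransform.fourier (⇑h) σ) (τ / (2*Real.pi)) := by
      funext τ
      simp only
      rw [hFT τ, hgapp]
      have hπ : (2*Real.pi) ≠ 0 := by positivity
      rw [show ((2*Real.pi*(τ/(2*Real.pi)) : ℝ):ℂ) = (τ:ℂ) by
        norm_cast; field_simp]
      simp
    have hstep2 : (∫ τ : ℝ, Complex.exp (Complex.I*t*τ) *
          Complex.exp (r₀ τ * ((0:ℝ):ℂ)) * FT1 (⇑h) τ)
        = |2*Real.pi| • ∫ σ : ℝ, Complex.exp (Complex.I*t*((2*Real.pi*σ : ℝ):ℂ)) *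
            FourierTransform.fourier (⇑h) σ := by
      rw [hstep1]
      exact MeasureTheory.Measure.integral_comp_div
        (fun σ : ℝ => Complex.exp (Complex.I*t*((2*Real.pi*σ : ℝ):ℂ)) *
          FourierTransform.fourier (⇑h) σ) (2*Real.pi)
    have hstep3 : (∫ σ : ℝ, Complex.exp (Complex.I*t*((2*Real.pi*σ : ℝ):ℂ)) *
        FourierTransform.fourier (⇑h) σ) = h t := by
      rw [← hinv, Real.fourierInv_eq']
      congr 1
      funext v
      rw [smul_eq_mul]
      congr 2
      simp only [RCLike.inner_apply, conj_trivial]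
      push_cast
      ring
    rw [hstep2, hstep3, abs_of_pos (by positivity : (0:ℝ) < 2*Real.pi), Complex.real_smul]
    have hπ : ((Real.pi:ℂ)) ≠ 0 := Complex.ofReal_ne_zero.mpr Real.pi_ne_zero
    push_cast
    field_simp
  refine ⟨?_, htrace, ?_⟩
  · intro x hx
    refine (hint 0 x hx).congr (Eventually.of_forall fun τ => ?_)
    simp only [hΦ, pow_zero, mul_one]
  · have hRpot : (fun y : ℝ => Rpot r₀ (⇑h) t y)
        = fun y : ℝ => (1 / (2 * (Real.pi : ℂ))) * ∫ τ, Φ 0 y τ := by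
      funext y
      rw [Rpot]
      congr 1
      refine integral_congr_ae (Eventually.of_forall fun τ => ?_)
      simp only [hΦ, pow_zero, mul_one]
    refine ⟨fun x => (1 / (2 * (Real.pi : ℂ))) * ∫ τ, Φ 1 x τ, ?_, ?_,
      fun x => (1 / (2 * (Real.pi : ℂ))) * ∫ τ, Φ 2 x τ, ?_, ?_⟩
    · intro x hx
      rw [hRpot]
      exact (hderiv 0 x hx).const_mul _
    · show (1 / (2 * (Real.pi : ℂ))) * (∫ τ, Φ 1 (0:ℝ) τ) = _
      congr 1
      refine integral_congr_ae (Eventually.of_forall fun τ => ?_)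
      simp only [hΦ, pow_one, Complex.ofReal_zero, mul_zero, Complex.exp_zero, mul_one]
    · intro x hx
      exact (hderiv 1 x hx).const_mul _
    · show (1 / (2 * (Real.pi : ℂ))) * (∫ τ, Φ 2 (0:ℝ) τ) = _
      congr 1
      refine integral_congr_ae (Eventually.of_forall fun τ => ?_)
      simp only [hΦ, Complex.ofReal_zero, mul_zero, Complex.exp_zero, mul_one]
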